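/- Let α ∈ ℂ, x = |α|², and define u : ℕ → ℂ by u_n = e^{-x/2}(α^n + (-α)^n)/√(n!) (the unnormalized even cat state coefficients), and Ψ : ℕ × ℕ → ℂ by Ψ(n,m) = u_n·[m=0] + [n=0]·u_m (the unnormalized even-coherent NOON state). Then the Bell correlator E := (4|Ψ(0,0)|² − 2·Σ_{m}|Ψ(0,m)|² − 2·Σ_{n}|Ψ(n,0)|² + Σ_{(n,m)}|Ψ(n,m)|²) / (Σ_{(n,m)}|Ψ(n,m)|²) equals (6e^{-x} − 1 − e^{-2x})/(1+e^{-x})². -/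

import Mathlib

open scoped BigOperators

/-- The reference-frame-independent Bell correlator `⟨M₀ᴬ M₀ᴮ⟩` of the
even-coherent NOON state equals `N[6e^{-x} − (1 + e^{-2x})]` with
`N = 1/(1+e^{-x})²`, `x = |α|²`. -/
theorem even_coherent_NOON_bell_correlator
    (α : ℂ) (x : ℝ) (hx : x = ‖α‖ ^ 2)
    (u : ℕ → ℂ)
    (hu : ∀ n : ℕ, u n = ((Real.exp (-x / 2) : ℝ) : ℂ) * (α ^ n + (-α) ^ n) /
      ((Real.sqrt (Nat.factorial n) : ℝ) : ℂ))
    (Ψ : ℕ × ℕ → ℂ)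
    (hΨ : ∀ n m : ℕ, Ψ (n, m) =
      u n * (if m = 0 then 1 else 0) + (if n = 0 then 1 else 0) * u m)
    (E : ℝ)
    (hE : E = (4 * ‖Ψ (0, 0)‖ ^ 2
        - 2 * ∑' m : ℕ, ‖Ψ (0, m)‖ ^ 2
        - 2 * ∑' n : ℕ, ‖Ψ (n, 0)‖ ^ 2
        + ∑' p : ℕ × ℕ, ‖Ψ p‖ ^ 2) /
      ∑' p : ℕ × ℕ, ‖Ψ p‖ ^ 2) :
    E = (6 * Real.exp (-x) - 1 - Real.exp (-2 * x)) / (1 + Real.exp (-x)) ^ 2 := by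
  -- notation
  set f : ℕ → ℝ := fun n => ‖u n‖ ^ 2 with hfdef
  -- closed form for f
  have hf : ∀ n : ℕ, f n = Real.exp (-x) *
      (2 * (x ^ n / (Nat.factorial n : ℝ)) + 2 * ((-x) ^ n / (Nat.factorial n : ℝ))) := by
    intro n
    have hfac : (0:ℝ) < (Nat.factorial n : ℝ) := by positivity
    have habs : ‖u n‖ =
        Real.exp (-x/2) * ‖α ^ n + (-α) ^ n‖ / Real.sqrt (Nat.factorial n) := by
      rw [hu, norm_div, norm_mul, Complex.norm_of_nonneg (Real.exp_pos _).le,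
        Complex.norm_of_nonneg (Real.sqrt_nonneg _)]
    have hexpsq : Real.exp (-x/2) ^ 2 = Real.exp (-x) := by
      rw [sq, ← Real.exp_add]; ring_nf
    rcases Nat.even_or_odd n with h | h
    · have h1 : (-α) ^ n = α ^ n := h.neg_pow α
      have h2 : (-x) ^ n = x ^ n := h.neg_pow x
      have h3 : α ^ n + (-α) ^ n = 2 * α ^ n := by rw [h1]; ring
      have h4 : ‖α ^ n + (-α) ^ n‖ = 2 * ‖α‖ ^ n := by
        rw [h3, norm_mul, norm_pow, Complex.norm_two]
      have h5 : (‖α‖ ^ n) ^ 2 = x ^ n := by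
        rw [hx, ← pow_mul, ← pow_mul, Nat.mul_comm]
      simp only [hfdef, habs, h4, h2]
      rw [div_pow, mul_pow, Real.sq_sqrt hfac.le, hexpsq, mul_pow, h5]
      field_simp
      ring
    · have h1 : (-α) ^ n = -(α ^ n) := h.neg_pow α
      have h2 : (-x) ^ n = -(x ^ n) := h.neg_pow x
      have h3 : α ^ n + (-α) ^ n = 0 := by rw [h1]; ring
      simp only [hfdef, habs, h3, h2, norm_zero]
      field_simp
      ring
  -- summability and sums of the basic series
  have hexp : ∀ y : ℝ, ∑' n : ℕ, y ^ n / (Nat.factorial n : ℝ) = Real.exp y := by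
    intro y
    rw [Real.exp_eq_exp_ℝ, NormedSpace.exp_eq_tsum_div]
  have hsum1 : Summable fun n : ℕ => x ^ n / (Nat.factorial n : ℝ) :=
    Real.summable_pow_div_factorial x
  have hsum2 : Summable fun n : ℕ => (-x) ^ n / (Nat.factorial n : ℝ) :=
    Real.summable_pow_div_factorial (-x)
  have hfs : Summable f := by
    have : f = fun n => Real.exp (-x) *
        (2 * (x ^ n / (Nat.factorial n : ℝ)) + 2 * ((-x) ^ n / (Nat.factorial n : ℝ))) :=
      funext hf
    rw [this]
    exact ((hsum1.mul_left 2).add (hsum2.mul_left 2)).mul_left _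
  have hSf : ∑' n, f n = 2 + 2 * Real.exp (-2 * x) := by
    have h1 : Real.exp (-x) * Real.exp x = 1 := by rw [← Real.exp_add]; simp
    have h2 : Real.exp (-x) * Real.exp (-x) = Real.exp (-2 * x) := by
      rw [← Real.exp_add]; ring_nf
    calc ∑' n, f n
        = ∑' n, Real.exp (-x) *
          (2 * (x ^ n / (Nat.factorial n : ℝ)) + 2 * ((-x) ^ n / (Nat.factorial n : ℝ))) :=
          tsum_congr hf
      _ = Real.exp (-x) * (2 * Real.exp x + 2 * Real.exp (-x)) := by
          rw [tsum_mul_left, Summable.tsum_add (hsum1.mul_left 2) (hsum2.mul_left 2),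
            tsum_mul_left, tsum_mul_left, hexp, hexp]
      _ = 2 + 2 * Real.exp (-2 * x) := by linear_combination 2 * h1 + 2 * h2
  have ha : f 0 = 4 * Real.exp (-x) := by rw [hf]; norm_num; ring
  -- the value at the origin
  have hf0 : ‖u 0‖ ^ 2 = f 0 := rfl
  have h2u : Ψ (0, 0) = 2 * u 0 := by rw [hΨ 0 0]; simp [two_mul]
  have h00 : ‖Ψ (0, 0)‖ ^ 2 = 4 * f 0 := by
    rw [h2u, norm_mul, Complex.norm_two, mul_pow, hf0]
    norm_num
  -- row and column sums
  have hrow : ∀ m : ℕ, ‖Ψ (0, m)‖ ^ 2 = f m + (if m = 0 then 3 * f 0 else 0) := by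
    intro m
    by_cases hm : m = 0
    · subst hm
      rw [h00, if_pos rfl]; ring
    · rw [hΨ 0 m]
      simp [hm, hfdef]
  have hcol : ∀ n : ℕ, ‖Ψ (n, 0)‖ ^ 2 = f n + (if n = 0 then 3 * f 0 else 0) := by
    intro n
    by_cases hn : n = 0
    · subst hn
      rw [h00, if_pos rfl]; ring
    · rw [hΨ n 0]
      simp [hn, hfdef]
  have hites : ∀ c : ℝ, Summable fun n : ℕ => (if n = 0 then c else 0) := by
    intro c
    exact (hasSum_ite_eq (0 : ℕ) c).summable
  have hitet : ∀ c : ℝ, ∑' n : ℕ, (if n = 0 then c else 0) = c := by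
    intro c
    exact tsum_ite_eq (0 : ℕ) (fun _ => c)
  have hrowsum : ∑' m : ℕ, ‖Ψ (0, m)‖ ^ 2 = (∑' n, f n) + 3 * f 0 := by
    rw [tsum_congr hrow, Summable.tsum_add hfs (hites _), hitet]
  have hcolsum : ∑' n : ℕ, ‖Ψ (n, 0)‖ ^ 2 = (∑' n, f n) + 3 * f 0 := by
    rw [tsum_congr hcol, Summable.tsum_add hfs (hites _), hitet]
  -- the full double sum
  have hinner : ∀ n : ℕ, (∑' m : ℕ, ‖Ψ (n, m)‖ ^ 2)
      = f n + (if n = 0 then (∑' k, f k) + 2 * f 0 else 0) := by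
    intro n
    by_cases hn : n = 0
    · subst hn
      rw [hrowsum, if_pos rfl]
      ring
    · have hfn : ∀ m : ℕ, ‖Ψ (n, m)‖ ^ 2 = (if m = 0 then f n else 0) := by
        intro m
        by_cases hm : m = 0
        · subst hm; rw [hΨ n 0]; simp [hn, hfdef]
        · rw [hΨ n m]; simp [hn, hm]
      rw [tsum_congr hfn, hitet]
      simp [hn]
  have hrowsummable : ∀ n : ℕ, Summable fun m : ℕ => ‖Ψ (n, m)‖ ^ 2 := by
    intro n
    by_cases hn : n = 0
    · subst hn
      have : (fun m : ℕ => ‖Ψ (0, m)‖ ^ 2)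
          = fun m => f m + (if m = 0 then 3 * f 0 else 0) := funext hrow
      rw [this]; exact hfs.add (hites _)
    · have : (fun m : ℕ => ‖Ψ (n, m)‖ ^ 2)
          = fun m => (if m = 0 then f n else 0) := by
        funext m
        by_cases hm : m = 0
        · subst hm; rw [hΨ n 0]; simp [hn, hfdef]
        · rw [hΨ n m]; simp [hn, hm]
      rw [this]; exact (hasSum_ite_eq (0 : ℕ) _).summable
  have hFsummable : Summable fun p : ℕ × ℕ => ‖Ψ p‖ ^ 2 := by
    rw [summable_prod_of_nonneg (fun p => by positivity)]
    constructor
    · exact hrowsummable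
    · have : (fun n : ℕ => ∑' m : ℕ, ‖Ψ (n, m)‖ ^ 2)
          = fun n => f n + (if n = 0 then (∑' k, f k) + 2 * f 0 else 0) := funext hinner
      rw [this]
      exact hfs.add (hites _)
  have hfull : ∑' p : ℕ × ℕ, ‖Ψ p‖ ^ 2 = 2 * (∑' n, f n) + 2 * f 0 := by
    rw [Summable.tsum_prod' hFsummable hrowsummable, tsum_congr hinner,
      Summable.tsum_add hfs (hites _), hitet]
    ring
  -- final computation
  rw [hE, h00, hrowsum, hcolsum, hfull, hSf, ha]
  have hp : (0:ℝ) < Real.exp (-x) := Real.exp_pos _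
  have hp2 : (0:ℝ) < Real.exp (-2 * x) := Real.exp_pos _
  have hsq : Real.exp (-2 * x) = Real.exp (-x) ^ 2 := by
    rw [sq, ← Real.exp_add]; ring_nf
  rw [div_eq_div_iff (by nlinarith) (by positivity)]
  rw [hsq]
  ring
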